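/- The operators ρP, ρT satisfy the relations ρT ∘ ρT* = −q⁴ ρP² + ρP and ρT* ∘ ρT = q⁻⁴ (ρP − ρP²), where * denotes the Hilbert-space adjoint. -/

import Mathlib

open ContinuousLinearMap in
/-- The operators `ρP, ρT` on `ℓ²(ℕ)` satisfy
`ρT ρT* = -q⁴ ρP² + ρP` and `ρT* ρT = q⁻⁴ (ρP - ρP²)`. -/
theorem stmt3 {H : Type*} [NormedAddCommGroup H] [InnerProductSpace ℂ H] [CompleteSpace H]
    (e : HilbertBasis ℕ ℂ H) (q : ℝ) (hq0 : 0 < q) (hq1 : q < 1)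
    (ρP ρT ρR : H →L[ℂ] H)
    (hP : ∀ k : ℕ, ρP (e k) = ((q ^ (4 * k) : ℝ) : ℂ) • e k)
    (hT0 : ρT (e 0) = 0)
    (hT : ∀ k : ℕ, ρT (e (k + 1)) =
      ((q ^ (2 * k) * Real.sqrt (1 - q ^ (4 * (k + 1))) : ℝ) : ℂ) • e k)
    (hR0 : ρR (e 0) = 0) (hR1 : ρR (e 1) = 0)
    (hR : ∀ k : ℕ, ρR (e (k + 2)) =
      ((Real.sqrt ((1 - q ^ (4 * (k + 2))) * (1 - q ^ (4 * (k + 1)))) : ℝ) : ℂ) • e k) :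
    ρT * adjoint ρT = -((q : ℂ) ^ 4) • ρP ^ 2 + ρP ∧
    adjoint ρT * ρT = (((q : ℂ) ^ 4)⁻¹) • (ρP - ρP ^ 2) := by
  classical
  have hqne : (q : ℝ) ≠ 0 := ne_of_gt hq0
  -- orthonormality
  have horth : ∀ i j : ℕ, (inner ℂ (e i) (e j) : ℂ) = if i = j then 1 else 0 := by
    have := e.orthonormal
    rw [orthonormal_iff_ite] at this
    exact this
  -- coefficient
  set c : ℕ → ℝ := fun k => q ^ (2 * k) * Real.sqrt (1 - q ^ (4 * (k + 1))) with hc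
  have hsq : ∀ k : ℕ, c k ^ 2 = q ^ (4 * k) * (1 - q ^ (4 * (k + 1))) := by
    intro k
    have hle : (0:ℝ) ≤ 1 - q ^ (4 * (k + 1)) := by
      have : q ^ (4 * (k + 1)) ≤ 1 := by
        exact pow_le_one₀ (le_of_lt hq0) (le_of_lt hq1)
      linarith
    have : (Real.sqrt (1 - q ^ (4 * (k + 1)))) ^ 2 = 1 - q ^ (4 * (k + 1)) :=
      Real.sq_sqrt hle
    simp only [hc]
    rw [mul_pow, this, ← pow_mul]
    ring_nf
  -- adjoint action on basis
  have hTadj : ∀ k : ℕ, adjoint ρT (e k) = ((c k : ℝ) : ℂ) • e (k + 1) := by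
    intro k
    apply e.repr.injective
    apply lp.ext
    funext j
    have h1 : e.repr (adjoint ρT (e k)) j = inner ℂ (e j) (adjoint ρT (e k)) :=
      e.repr_apply_apply _ j
    have h2 : e.repr (((c k : ℝ) : ℂ) • e (k + 1)) j
        = inner ℂ (e j) (((c k : ℝ) : ℂ) • e (k + 1)) := e.repr_apply_apply _ j
    rw [h1, h2, ContinuousLinearMap.adjoint_inner_right, inner_smul_right, horth]
    cases j with
    | zero => simp [hT0]
    | succ m =>
      rw [hT m, inner_smul_left, horth]
      by_cases hmk : m = k
      · subst hmk; simp [hc]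
      · have : ¬ (m + 1 = k + 1) := by omega
        simp [hmk, this]
  have hreal : ∀ (k : ℕ) (a : ℝ), (((a : ℂ)) * ((a : ℂ))) = ((a ^ 2 : ℝ) : ℂ) := by
    intro k a; push_cast; ring
  constructor
  · apply ContinuousLinearMap.ext_on
      (Submodule.dense_iff_topologicalClosure_eq_top.mpr e.dense_span)
    rintro x ⟨k, rfl⟩
    rw [pow_two]
    simp only [ContinuousLinearMap.mul_apply, ContinuousLinearMap.add_apply,
      ContinuousLinearMap.neg_apply, ContinuousLinearMap.smul_apply]
    rw [hTadj k, map_smul, hT k, hP k, map_smul, hP k,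
      smul_smul, smul_smul, smul_smul, ← add_smul]
    congr 1
    have key : (q ^ (2 * k) * Real.sqrt (1 - q ^ (4 * (k + 1)))) * c k
        = -(q ^ 4) * (q ^ (4 * k) * q ^ (4 * k)) + q ^ (4 * k) := by
      have h := hsq k
      rw [pow_two] at h
      simp only [hc] at h ⊢
      rw [h]
      ring
    simp only [hc] at key ⊢
    rw [← Complex.ofReal_mul, key]
    push_cast
    ring
  · apply ContinuousLinearMap.ext_on
      (Submodule.dense_iff_topologicalClosure_eq_top.mpr e.dense_span)
    rintro x ⟨k, rfl⟩
    rw [pow_two]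
    simp only [ContinuousLinearMap.mul_apply, ContinuousLinearMap.smul_apply,
      ContinuousLinearMap.sub_apply]
    cases k with
    | zero =>
      rw [hT0, map_zero, hP 0, map_smul, hP 0]
      simp
    | succ m =>
      rw [hT m, map_smul, hTadj m, hP (m + 1), map_smul, hP (m + 1),
        smul_smul, smul_smul, ← sub_smul, smul_smul]
      congr 1
      have key : (q ^ (2 * m) * Real.sqrt (1 - q ^ (4 * (m + 1)))) * c m
          = (q ^ 4)⁻¹ * (q ^ (4 * (m + 1)) - q ^ (4 * (m + 1)) * q ^ (4 * (m + 1))) := by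
        have h := hsq m
        rw [pow_two] at h
        simp only [hc] at h ⊢
        rw [h]
        have h4 : (q:ℝ) ^ 4 ≠ 0 := pow_ne_zero _ hqne
        field_simp
        ring
      simp only [hc] at key ⊢
      rw [← Complex.ofReal_mul, key]
      push_cast
      ring
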